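/- Let A and B be positive semi-definite n×n real matrices with eigenvalues λ_1(A) ≥ ⋯ ≥ λ_n(A) and λ_1(B) ≥ ⋯ ≥ λ_n(B). Then for all indices i, j with i + j ≤ n + 1, the (i+j−1)-th largest eigenvalue of AB satisfies λ_{i+j−1}(AB) ≤ λ_i(A) · λ_j(B). -/

import Mathlib

open Matrix Polynomial

section aux

lemma my_charpoly_mul_comm {n : ℕ} (A B : Matrix (Fin n) (Fin n) ℝ) :
    (A * B).charpoly = (B * A).charpoly := by
  classical
  set f := ((C : ℝ →+* ℝ[X]).mapMatrix : Matrix (Fin n) (Fin n) ℝ →+* Matrix (Fin n) (Fin n) ℝ[X]) with hf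
  set x := Matrix.scalar (Fin n) (X : ℝ[X]) with hx
  have hcomm : ∀ M : Matrix (Fin n) (Fin n) ℝ[X], x * M = M * x := fun M =>
    (Matrix.scalar_commute (X : ℝ[X]) (Commute.all _) M).eq
  have h1 : (fromBlocks x (f A) (f B) 1 : Matrix _ _ ℝ[X]) * fromBlocks 1 0 (-(f B)) x
      = fromBlocks (x - f A * f B) (f A * x) 0 x := by
    rw [fromBlocks_multiply]
    congr 1 <;> simp [mul_neg, sub_eq_add_neg]
  have h2 : (fromBlocks 1 0 (-(f B)) x : Matrix _ _ ℝ[X]) * fromBlocks x (f A) (f B) 1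
      = fromBlocks x (f A) 0 (x - f B * f A) := by
    rw [fromBlocks_multiply]
    congr 1 <;> simp [mul_neg, sub_eq_add_neg, hcomm (f B), neg_add_eq_sub]
  have hdet := Matrix.det_mul_comm (fromBlocks x (f A) (f B) 1 : Matrix _ _ ℝ[X])
    (fromBlocks 1 0 (-(f B)) x)
  rw [h1, h2, det_fromBlocks_zero₂₁, det_fromBlocks_zero₂₁] at hdet
  have hdx : det x = X ^ n := by
    simp [hx, Matrix.scalar, det_diagonal]
  have hXn : (X : ℝ[X]) ^ n ≠ 0 := pow_ne_zero _ X_ne_zero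
  have key : det (x - f A * f B) = det (x - f B * f A) := by
    rw [hdx] at hdet
    have := hdet
    exact mul_right_cancel₀ hXn (by linear_combination this)
  have e1 : (A * B).charpoly = det (x - f A * f B) := by
    rw [Matrix.charpoly, charmatrix]
    congr 1
    simp [hf, hx]
  have e2 : (B * A).charpoly = det (x - f B * f A) := by
    rw [Matrix.charpoly, charmatrix]
    congr 1
    simp [hf, hx]
  rw [e1, e2, key]

lemma charpoly_diag {n : ℕ} (d : Fin n → ℝ) :
    (Matrix.diagonal d).charpoly = ∏ i, (X - C (d i)) := by
  classical
  rw [Matrix.charpoly]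
  have : charmatrix (Matrix.diagonal d) = Matrix.diagonal fun i => (X : ℝ[X]) - C (d i) := by
    ext i j
    by_cases h : i = j
    · subst h; simp [charmatrix_apply_eq]
    · simp [charmatrix_apply_ne _ _ _ h, Matrix.diagonal_apply_ne _ h]
  rw [this, det_diagonal]

lemma herm_roots {n : ℕ} {A : Matrix (Fin n) (Fin n) ℝ} (hA : A.IsHermitian) :
    A.charpoly.roots = Multiset.map hA.eigenvalues Finset.univ.val := by
  classical
  have hsp := hA.spectral_theorem
  have hU : (star (hA.eigenvectorUnitary : Matrix (Fin n) (Fin n) ℝ)) *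
      (hA.eigenvectorUnitary : Matrix (Fin n) (Fin n) ℝ) = 1 :=
    Unitary.coe_star_mul_self hA.eigenvectorUnitary
  have h1 : A.charpoly
      = (Matrix.diagonal (RCLike.ofReal ∘ hA.eigenvalues) : Matrix (Fin n) (Fin n) ℝ).charpoly := by
    calc A.charpoly
        = ((hA.eigenvectorUnitary : Matrix (Fin n) (Fin n) ℝ) *
            (Matrix.diagonal (RCLike.ofReal ∘ hA.eigenvalues) *
              star (hA.eigenvectorUnitary : Matrix (Fin n) (Fin n) ℝ))).charpoly := by
          rw [← Matrix.mul_assoc]; conv_lhs => rw [hsp, Unitary.conjStarAlgAut_apply]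
      _ = ((Matrix.diagonal (RCLike.ofReal ∘ hA.eigenvalues) *
              star (hA.eigenvectorUnitary : Matrix (Fin n) (Fin n) ℝ)) *
            (hA.eigenvectorUnitary : Matrix (Fin n) (Fin n) ℝ)).charpoly :=
          my_charpoly_mul_comm _ _
      _ = _ := by rw [Matrix.mul_assoc, hU, Matrix.mul_one]
  have h2 : (RCLike.ofReal ∘ hA.eigenvalues : Fin n → ℝ) = hA.eigenvalues := by
    funext i; simp
  rw [h1, h2, charpoly_diag]
  have h3 : (∏ i, ((X : ℝ[X]) - C (hA.eigenvalues i)))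
      = ((Multiset.map hA.eigenvalues Finset.univ.val).map fun a => X - C a).prod := by
    rw [Multiset.map_map]
    rfl
  rw [h3, roots_multiset_prod_X_sub_C]

lemma Matrix.IsHermitian.star_mul_self_mul_eq_diagonal {n : ℕ} {A : Matrix (Fin n) (Fin n) ℝ}
    (hA : A.IsHermitian) :
    star (hA.eigenvectorUnitary : Matrix (Fin n) (Fin n) ℝ) * A *
      (hA.eigenvectorUnitary : Matrix (Fin n) (Fin n) ℝ)
      = Matrix.diagonal (RCLike.ofReal ∘ hA.eigenvalues) := by
  have hU := Unitary.coe_star_mul_self hA.eigenvectorUnitary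
  have h := hA.spectral_theorem
  rw [Unitary.conjStarAlgAut_apply] at h
  calc _ = star (hA.eigenvectorUnitary : Matrix (Fin n) (Fin n) ℝ) *
        ((hA.eigenvectorUnitary : Matrix (Fin n) (Fin n) ℝ) *
          Matrix.diagonal (RCLike.ofReal ∘ hA.eigenvalues) *
          star (hA.eigenvectorUnitary : Matrix (Fin n) (Fin n) ℝ)) *
        (hA.eigenvectorUnitary : Matrix (Fin n) (Fin n) ℝ) :=
        congrArg (fun M => star (hA.eigenvectorUnitary : Matrix (Fin n) (Fin n) ℝ) * M *
          (hA.eigenvectorUnitary : Matrix (Fin n) (Fin n) ℝ)) h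
    _ = _ := by
      simp only [← Matrix.mul_assoc, hU, Matrix.one_mul]
      rw [Matrix.mul_assoc, hU, Matrix.mul_one]

open scoped MatrixOrder in
noncomputable def Matrix.PosSemidef.sqrt {n : ℕ} {A : Matrix (Fin n) (Fin n) ℝ}
    (_hA : A.PosSemidef) : Matrix (Fin n) (Fin n) ℝ := CFC.sqrt A

open scoped MatrixOrder in
lemma Matrix.PosSemidef.posSemidef_sqrt {n : ℕ} {A : Matrix (Fin n) (Fin n) ℝ}
    (hA : A.PosSemidef) : hA.sqrt.PosSemidef :=
  Matrix.nonneg_iff_posSemidef.mp (CFC.sqrt_nonneg A)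

open scoped MatrixOrder in
lemma Matrix.PosSemidef.sqrt_mul_self {n : ℕ} {A : Matrix (Fin n) (Fin n) ℝ}
    (hA : A.PosSemidef) : hA.sqrt * hA.sqrt = A :=
  CFC.sqrt_mul_sqrt_self A (Matrix.nonneg_iff_posSemidef.mpr hA)

lemma count_ge {n : ℕ} (a μ : Fin n → ℝ) (ha : Antitone a)
    (h : Multiset.map a Finset.univ.val = Multiset.map μ Finset.univ.val) (m : Fin n) :
    (m : ℕ) + 1 ≤ (Finset.univ.filter fun k => a m ≤ μ k).card := by
  classical
  have h1 : (Finset.univ.filter fun k => a m ≤ μ k).card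
      = Multiset.countP (fun x => a m ≤ x) (Multiset.map μ Finset.univ.val) := by
    rw [Multiset.countP_map]
    rfl
  have h2 : (Finset.univ.filter fun k => a m ≤ a k).card
      = Multiset.countP (fun x => a m ≤ x) (Multiset.map a Finset.univ.val) := by
    rw [Multiset.countP_map]
    rfl
  rw [h1, ← h, ← h2]
  have hsub : Finset.Iic m ⊆ Finset.univ.filter fun k => a m ≤ a k := by
    intro k hk
    simp only [Finset.mem_Iic] at hk
    simp only [Finset.mem_filter, Finset.mem_univ, true_and]
    exact ha hk
  calc (m : ℕ) + 1 = (Finset.Iic m).card := (Fin.card_Iic m).symm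
    _ ≤ _ := Finset.card_le_card hsub

lemma count_gt {n : ℕ} (a μ : Fin n → ℝ) (ha : Antitone a)
    (h : Multiset.map a Finset.univ.val = Multiset.map μ Finset.univ.val) (m : Fin n) :
    (Finset.univ.filter fun k => a m < μ k).card ≤ (m : ℕ) := by
  classical
  have h1 : (Finset.univ.filter fun k => a m < μ k).card
      = Multiset.countP (fun x => a m < x) (Multiset.map μ Finset.univ.val) := by
    rw [Multiset.countP_map]
    rfl
  have h2 : (Finset.univ.filter fun k => a m < a k).card
      = Multiset.countP (fun x => a m < x) (Multiset.map a Finset.univ.val) := by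
    rw [Multiset.countP_map]
    rfl
  rw [h1, ← h, ← h2]
  have hsub : (Finset.univ.filter fun k => a m < a k) ⊆ Finset.Iio m := by
    intro k hk
    simp only [Finset.mem_filter, Finset.mem_univ, true_and] at hk
    simp only [Finset.mem_Iio]
    by_contra hc
    exact absurd (ha (not_lt.mp hc)) (not_le.mpr hk)
  calc _ ≤ (Finset.Iio m).card := Finset.card_le_card hsub
    _ = (m : ℕ) := Fin.card_Iio m

lemma mem_of_multiset_eq {n : ℕ} (a μ : Fin n → ℝ)
    (h : Multiset.map a Finset.univ.val = Multiset.map μ Finset.univ.val) (m : Fin n) :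
    ∃ l, μ l = a m := by
  have : a m ∈ Multiset.map μ Finset.univ.val := by
    rw [← h]
    exact Multiset.mem_map_of_mem a (Finset.mem_univ_val m)
  obtain ⟨l, -, hl⟩ := Multiset.mem_map.mp this
  exact ⟨l, hl⟩

lemma quad_le {n : ℕ} (D z : Fin n → ℝ) (t : ℝ) (h : ∀ l, D l ≤ t ∨ z l = 0) :
    z ⬝ᵥ (Matrix.diagonal D *ᵥ z) ≤ t * (z ⬝ᵥ z) := by
  simp only [dotProduct, Matrix.mulVec_diagonal, Finset.mul_sum]
  apply Finset.sum_le_sum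
  intro l _
  rcases h l with h | h
  · nlinarith [mul_self_nonneg (z l)]
  · simp [h]

lemma quad_ge {n : ℕ} (D z : Fin n → ℝ) (t : ℝ) (h : ∀ l, t ≤ D l ∨ z l = 0) :
    t * (z ⬝ᵥ z) ≤ z ⬝ᵥ (Matrix.diagonal D *ᵥ z) := by
  simp only [dotProduct, Matrix.mulVec_diagonal, Finset.mul_sum]
  apply Finset.sum_le_sum
  intro l _
  rcases h l with h | h
  · nlinarith [mul_self_nonneg (z l)]
  · simp [h]

noncomputable def extZero {n : ℕ} (K : Finset (Fin n)) : (↥K → ℝ) →ₗ[ℝ] (Fin n → ℝ) where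
  toFun d k := if h : k ∈ K then d ⟨k, h⟩ else 0
  map_add' d e := by funext k; by_cases h : k ∈ K <;> simp [h]
  map_smul' r d := by funext k; by_cases h : k ∈ K <;> simp [h]

lemma extZero_ne_zero {n : ℕ} {K : Finset (Fin n)} {d : ↥K → ℝ} (hd : d ≠ 0) :
    extZero K d ≠ 0 := by
  intro h
  apply hd
  funext k
  have := congrFun h (k : Fin n)
  simpa [extZero, k.2] using this

lemma extZero_eq_zero_of_not_mem {n : ℕ} {K : Finset (Fin n)} (d : ↥K → ℝ) {k : Fin n}
    (hk : k ∉ K) : extZero K d k = 0 := by simp [extZero, hk]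

lemma exists_kernel {n : ℕ} {K : Finset (Fin n)} {V : Type} [AddCommGroup V] [Module ℝ V]
    [FiniteDimensional ℝ V] (f : (↥K → ℝ) →ₗ[ℝ] V)
    (h : Module.finrank ℝ V < K.card) : ∃ d : ↥K → ℝ, d ≠ 0 ∧ f d = 0 := by
  classical
  have hdim : Module.finrank ℝ (↥K → ℝ) = K.card := by
    simp [Module.finrank_pi]
  by_contra hc
  push_neg at hc
  have hinj : Function.Injective f := by
    rw [← LinearMap.ker_eq_bot, Submodule.eq_bot_iff]
    intro d hd
    by_contra hdz
    exact absurd (hc d hdz) (not_ne_iff.mpr hd)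
  have := LinearMap.finrank_le_finrank_of_injective hinj
  omega

lemma conj_dot {n : ℕ} (P : Matrix (Fin n) (Fin n) ℝ) (x z : Fin n → ℝ) :
    x ⬝ᵥ (P *ᵥ z) = (Pᵀ *ᵥ x) ⬝ᵥ z := by
  rw [Matrix.dotProduct_mulVec, Matrix.mulVec_transpose]

lemma shift_dot {n : ℕ} (W : Matrix (Fin n) (Fin n) ℝ) (e v : Fin n → ℝ) :
    (W *ᵥ e) ⬝ᵥ v = e ⬝ᵥ (Wᵀ *ᵥ v) := by
  rw [dotProduct_comm, conj_dot, dotProduct_comm]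

lemma dot_conj {n : ℕ} (P W : Matrix (Fin n) (Fin n) ℝ) (e : Fin n → ℝ) :
    (W *ᵥ e) ⬝ᵥ (P *ᵥ (W *ᵥ e)) = e ⬝ᵥ ((Wᵀ * P * W) *ᵥ e) := by
  rw [Matrix.mulVec_mulVec, shift_dot, Matrix.mulVec_mulVec, ← Matrix.mul_assoc]

lemma dot_WW {n : ℕ} {W : Matrix (Fin n) (Fin n) ℝ} (hW : Wᵀ * W = 1) (e : Fin n → ℝ) :
    (W *ᵥ e) ⬝ᵥ (W *ᵥ e) = e ⬝ᵥ e := by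
  rw [shift_dot, Matrix.mulVec_mulVec, hW, Matrix.one_mulVec]

lemma upper_bound {n : ℕ} {B V : Matrix (Fin n) (Fin n) ℝ} {β : Fin n → ℝ}
    (hdiag : Vᵀ * B * V = Matrix.diagonal β) (hVVt : V * Vᵀ = 1)
    (t : ℝ) (y : Fin n → ℝ)
    (hcon : ∀ l, β l ≤ t ∨ (Vᵀ *ᵥ y) l = 0) :
    y ⬝ᵥ (B *ᵥ y) ≤ t * (y ⬝ᵥ y) := by
  have hVt : Vᵀᵀ * Vᵀ = 1 := by rwa [Matrix.transpose_transpose]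
  have hy : V *ᵥ (Vᵀ *ᵥ y) = y := by
    rw [Matrix.mulVec_mulVec, hVVt, Matrix.one_mulVec]
  calc y ⬝ᵥ (B *ᵥ y)
      = (V *ᵥ (Vᵀ *ᵥ y)) ⬝ᵥ (B *ᵥ (V *ᵥ (Vᵀ *ᵥ y))) := by rw [hy]
    _ = (Vᵀ *ᵥ y) ⬝ᵥ ((Vᵀ * B * V) *ᵥ (Vᵀ *ᵥ y)) := dot_conj _ _ _
    _ = (Vᵀ *ᵥ y) ⬝ᵥ (Matrix.diagonal β *ᵥ (Vᵀ *ᵥ y)) := by rw [hdiag]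
    _ ≤ t * ((Vᵀ *ᵥ y) ⬝ᵥ (Vᵀ *ᵥ y)) := quad_le _ _ _ hcon
    _ = t * (y ⬝ᵥ y) := by rw [dot_WW hVt]

lemma core {n : ℕ} (A B M S : Matrix (Fin n) (Fin n) ℝ)
    (hSsym : Sᵀ = S) (hSS : S * S = A) (hMdef : M = S * B * S)
    (U V W : Matrix (Fin n) (Fin n) ℝ) (α β μ : Fin n → ℝ)
    (hUUt : U * Uᵀ = 1) (hVVt : V * Vᵀ = 1) (hWtW : Wᵀ * W = 1)
    (hdA : Uᵀ * A * U = Matrix.diagonal α) (hdB : Vᵀ * B * V = Matrix.diagonal β)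
    (hdM : Wᵀ * M * W = Matrix.diagonal μ)
    (ta tb tc : ℝ) (hta : 0 ≤ ta) (htb : 0 ≤ tb)
    (K I J : Finset (Fin n))
    (hKp : ∀ k ∈ K, tc ≤ μ k) (hIp : ∀ l, l ∉ I → α l ≤ ta) (hJp : ∀ l, l ∉ J → β l ≤ tb)
    (hcard : I.card + J.card < K.card) :
    tc ≤ ta * tb := by
  classical
  set F : (↥K → ℝ) →ₗ[ℝ] (↥I → ℝ) × (↥J → ℝ) :=
    (((LinearMap.funLeft ℝ ℝ (Subtype.val : ↥I → Fin n)).comp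
        (Matrix.mulVecLin (Uᵀ * W))).prod
      ((LinearMap.funLeft ℝ ℝ (Subtype.val : ↥J → Fin n)).comp
        (Matrix.mulVecLin (Vᵀ * (S * W))))).comp (extZero K) with hF
  have hfr : Module.finrank ℝ ((↥I → ℝ) × (↥J → ℝ)) < K.card := by
    have : Module.finrank ℝ ((↥I → ℝ) × (↥J → ℝ)) = I.card + J.card := by
      rw [Module.finrank_prod]
      simp [Module.finrank_pi]
    omega
  obtain ⟨d, hd0, hFd⟩ := exists_kernel F hfr
  have he0 : extZero K d ≠ 0 := extZero_ne_zero hd0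
  have hzA : ∀ l ∈ I, (Uᵀ *ᵥ (W *ᵥ extZero K d)) l = 0 := by
    intro l hl
    have h := congrFun (congrArg Prod.fst hFd) ⟨l, hl⟩
    simp only [hF, LinearMap.comp_apply, LinearMap.prod_apply, Pi.prod,
      LinearMap.funLeft_apply, Matrix.mulVecLin_apply, Prod.fst_zero, Pi.zero_apply] at h
    rw [Matrix.mulVec_mulVec]
    exact h
  have hzB : ∀ l ∈ J, (Vᵀ *ᵥ (S *ᵥ (W *ᵥ extZero K d))) l = 0 := by
    intro l hl
    have h := congrFun (congrArg Prod.snd hFd) ⟨l, hl⟩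
    simp only [hF, LinearMap.comp_apply, LinearMap.prod_apply, Pi.prod,
      LinearMap.funLeft_apply, Matrix.mulVecLin_apply, Prod.snd_zero, Pi.zero_apply] at h
    rw [Matrix.mulVec_mulVec, Matrix.mulVec_mulVec, Matrix.mul_assoc]
    exact h
  have key1 : tc * (extZero K d ⬝ᵥ extZero K d)
      ≤ (W *ᵥ extZero K d) ⬝ᵥ (M *ᵥ (W *ᵥ extZero K d)) := by
    rw [dot_conj, hdM]
    apply quad_ge
    intro k
    by_cases hk : k ∈ K
    · exact Or.inl (hKp k hk)
    · exact Or.inr (extZero_eq_zero_of_not_mem d hk)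
  have key2 : (W *ᵥ extZero K d) ⬝ᵥ (M *ᵥ (W *ᵥ extZero K d))
      = (S *ᵥ (W *ᵥ extZero K d)) ⬝ᵥ (B *ᵥ (S *ᵥ (W *ᵥ extZero K d))) := by
    have h1 : M *ᵥ (W *ᵥ extZero K d) = S *ᵥ (B *ᵥ (S *ᵥ (W *ᵥ extZero K d))) := by
      rw [hMdef]
      simp only [Matrix.mulVec_mulVec, Matrix.mul_assoc]
    rw [h1, conj_dot, hSsym]
  have key3 : (S *ᵥ (W *ᵥ extZero K d)) ⬝ᵥ (B *ᵥ (S *ᵥ (W *ᵥ extZero K d)))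
      ≤ tb * ((S *ᵥ (W *ᵥ extZero K d)) ⬝ᵥ (S *ᵥ (W *ᵥ extZero K d))) := by
    apply upper_bound hdB hVVt
    intro l
    by_cases hl : l ∈ J
    · exact Or.inr (hzB l hl)
    · exact Or.inl (hJp l hl)
  have key4 : (S *ᵥ (W *ᵥ extZero K d)) ⬝ᵥ (S *ᵥ (W *ᵥ extZero K d))
      = (W *ᵥ extZero K d) ⬝ᵥ (A *ᵥ (W *ᵥ extZero K d)) := by
    rw [shift_dot S (W *ᵥ extZero K d), hSsym, Matrix.mulVec_mulVec, hSS]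
  have key5 : (W *ᵥ extZero K d) ⬝ᵥ (A *ᵥ (W *ᵥ extZero K d))
      ≤ ta * ((W *ᵥ extZero K d) ⬝ᵥ (W *ᵥ extZero K d)) := by
    apply upper_bound hdA hUUt
    intro l
    by_cases hl : l ∈ I
    · exact Or.inr (hzA l hl)
    · exact Or.inl (hIp l hl)
  have key6 : (W *ᵥ extZero K d) ⬝ᵥ (W *ᵥ extZero K d) = extZero K d ⬝ᵥ extZero K d :=
    dot_WW hWtW _
  have hE : 0 < extZero K d ⬝ᵥ extZero K d := by
    have h0 : 0 ≤ extZero K d ⬝ᵥ extZero K d := by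
      rw [dotProduct]
      exact Finset.sum_nonneg fun l _ => mul_self_nonneg _
    rcases lt_or_eq_of_le h0 with h | h
    · exact h
    · exact absurd (dotProduct_self_eq_zero.mp h.symm) he0
  have chain : tc * (extZero K d ⬝ᵥ extZero K d)
      ≤ (ta * tb) * (extZero K d ⬝ᵥ extZero K d) := by
    calc tc * (extZero K d ⬝ᵥ extZero K d)
        ≤ (W *ᵥ extZero K d) ⬝ᵥ (M *ᵥ (W *ᵥ extZero K d)) := key1
      _ = (S *ᵥ (W *ᵥ extZero K d)) ⬝ᵥ (B *ᵥ (S *ᵥ (W *ᵥ extZero K d))) := key2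
      _ ≤ tb * ((S *ᵥ (W *ᵥ extZero K d)) ⬝ᵥ (S *ᵥ (W *ᵥ extZero K d))) := key3
      _ = tb * ((W *ᵥ extZero K d) ⬝ᵥ (A *ᵥ (W *ᵥ extZero K d))) := by rw [key4]
      _ ≤ tb * (ta * ((W *ᵥ extZero K d) ⬝ᵥ (W *ᵥ extZero K d))) :=
          mul_le_mul_of_nonneg_left key5 htb
      _ = (ta * tb) * (extZero K d ⬝ᵥ extZero K d) := by rw [key6]; ring
  exact le_of_mul_le_mul_right chain hE

end aux

/-- For A, B positive semi-definite n×n real matrices with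
eigenvalues listed in decreasing order `a`, `b` respectively, and `c` the
decreasingly-ordered (real) eigenvalues of AB (the roots of its characteristic
polynomial), for all 0-based indices i, j with i + j ≤ n - 1 (i.e. 1-based
i' + j' ≤ n + 1) we have λ_{i+j}(AB) ≤ λ_i(A) · λ_j(B). -/
theorem stmt_1 {n : ℕ} (A B : Matrix (Fin n) (Fin n) ℝ)
    (hA : A.PosSemidef) (hB : B.PosSemidef)
    (a b c : Fin n → ℝ)
    (ha : Antitone a) (hb : Antitone b) (hc : Antitone c)
    (hma : Multiset.map a Finset.univ.val = A.charpoly.roots)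
    (hmb : Multiset.map b Finset.univ.val = B.charpoly.roots)
    (hmc : Multiset.map c Finset.univ.val = (A * B).charpoly.roots) :
    ∀ i j : Fin n, ∀ h : (i : ℕ) + (j : ℕ) < n,
      c ⟨(i : ℕ) + (j : ℕ), h⟩ ≤ a i * b j := by
  classical
  intro i j hij
  have hS : (hA.sqrt).PosSemidef := hA.posSemidef_sqrt
  have hSS : hA.sqrt * hA.sqrt = A := hA.sqrt_mul_self
  have starT : ∀ P : Matrix (Fin n) (Fin n) ℝ, star P = Pᵀ := fun P =>
    Matrix.conjTranspose_eq_transpose_of_trivial P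
  have hSsym : (hA.sqrt)ᵀ = hA.sqrt := by
    rw [← Matrix.conjTranspose_eq_transpose_of_trivial]
    exact hS.1
  have hM : (hA.sqrt * B * hA.sqrt).IsHermitian := by
    show (hA.sqrt * B * hA.sqrt)ᴴ = hA.sqrt * B * hA.sqrt
    rw [Matrix.conjTranspose_mul, Matrix.conjTranspose_mul, hS.1, hB.1, Matrix.mul_assoc]
  have hABM : (A * B).charpoly = (hA.sqrt * B * hA.sqrt).charpoly := by
    calc (A * B).charpoly = (hA.sqrt * (hA.sqrt * B)).charpoly := by
          rw [← Matrix.mul_assoc, hSS]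
      _ = ((hA.sqrt * B) * hA.sqrt).charpoly := my_charpoly_mul_comm _ _
  have hma' : Multiset.map a Finset.univ.val
      = Multiset.map hA.1.eigenvalues Finset.univ.val := by
    rw [hma, herm_roots hA.1]
  have hmb' : Multiset.map b Finset.univ.val
      = Multiset.map hB.1.eigenvalues Finset.univ.val := by
    rw [hmb, herm_roots hB.1]
  have hmc' : Multiset.map c Finset.univ.val
      = Multiset.map hM.eigenvalues Finset.univ.val := by
    rw [hmc, hABM, herm_roots hM]
  have ha0 : 0 ≤ a i := by
    obtain ⟨l, hl⟩ := mem_of_multiset_eq a hA.1.eigenvalues hma' i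
    rw [← hl]; exact hA.eigenvalues_nonneg l
  have hb0 : 0 ≤ b j := by
    obtain ⟨l, hl⟩ := mem_of_multiset_eq b hB.1.eigenvalues hmb' j
    rw [← hl]; exact hB.eigenvalues_nonneg l
  have hofReal : ∀ (g : Fin n → ℝ), (RCLike.ofReal ∘ g : Fin n → ℝ) = g := by
    intro g; funext l; simp
  -- unitaries and diagonalizations
  have hUUt : (hA.1.eigenvectorUnitary : Matrix (Fin n) (Fin n) ℝ) *
      (hA.1.eigenvectorUnitary : Matrix (Fin n) (Fin n) ℝ)ᵀ = 1 := by
    rw [← starT]; exact Unitary.coe_mul_star_self hA.1.eigenvectorUnitary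
  have hVVt : (hB.1.eigenvectorUnitary : Matrix (Fin n) (Fin n) ℝ) *
      (hB.1.eigenvectorUnitary : Matrix (Fin n) (Fin n) ℝ)ᵀ = 1 := by
    rw [← starT]; exact Unitary.coe_mul_star_self hB.1.eigenvectorUnitary
  have hWtW : (hM.eigenvectorUnitary : Matrix (Fin n) (Fin n) ℝ)ᵀ *
      (hM.eigenvectorUnitary : Matrix (Fin n) (Fin n) ℝ) = 1 := by
    rw [← starT]; exact Unitary.coe_star_mul_self hM.eigenvectorUnitary
  have hdA : (hA.1.eigenvectorUnitary : Matrix (Fin n) (Fin n) ℝ)ᵀ * A *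
      (hA.1.eigenvectorUnitary : Matrix (Fin n) (Fin n) ℝ)
      = Matrix.diagonal hA.1.eigenvalues := by
    have := hA.1.star_mul_self_mul_eq_diagonal
    rwa [starT, hofReal] at this
  have hdB : (hB.1.eigenvectorUnitary : Matrix (Fin n) (Fin n) ℝ)ᵀ * B *
      (hB.1.eigenvectorUnitary : Matrix (Fin n) (Fin n) ℝ)
      = Matrix.diagonal hB.1.eigenvalues := by
    have := hB.1.star_mul_self_mul_eq_diagonal
    rwa [starT, hofReal] at this
  have hdM : (hM.eigenvectorUnitary : Matrix (Fin n) (Fin n) ℝ)ᵀ * (hA.sqrt * B * hA.sqrt) *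
      (hM.eigenvectorUnitary : Matrix (Fin n) (Fin n) ℝ)
      = Matrix.diagonal hM.eigenvalues := by
    have := hM.star_mul_self_mul_eq_diagonal
    rwa [starT, hofReal] at this
  -- index sets
  have hKcard : (i : ℕ) + (j : ℕ) + 1 ≤
      (Finset.univ.filter fun k => c ⟨(i : ℕ) + (j : ℕ), hij⟩ ≤ hM.eigenvalues k).card := by
    have := count_ge c hM.eigenvalues hc hmc' ⟨(i : ℕ) + (j : ℕ), hij⟩
    simpa using this
  have hIcard : (Finset.univ.filter fun l => a i < hA.1.eigenvalues l).card ≤ (i : ℕ) :=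
    count_gt a hA.1.eigenvalues ha hma' i
  have hJcard : (Finset.univ.filter fun l => b j < hB.1.eigenvalues l).card ≤ (j : ℕ) :=
    count_gt b hB.1.eigenvalues hb hmb' j
  apply core A B (hA.sqrt * B * hA.sqrt) hA.sqrt hSsym hSS rfl
    (hA.1.eigenvectorUnitary : Matrix (Fin n) (Fin n) ℝ)
    (hB.1.eigenvectorUnitary : Matrix (Fin n) (Fin n) ℝ)
    (hM.eigenvectorUnitary : Matrix (Fin n) (Fin n) ℝ)
    hA.1.eigenvalues hB.1.eigenvalues hM.eigenvalues
    hUUt hVVt hWtW hdA hdB hdM (a i) (b j) _ ha0 hb0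
    (Finset.univ.filter fun k => c ⟨(i : ℕ) + (j : ℕ), hij⟩ ≤ hM.eigenvalues k)
    (Finset.univ.filter fun l => a i < hA.1.eigenvalues l)
    (Finset.univ.filter fun l => b j < hB.1.eigenvalues l)
    (fun k hk => (Finset.mem_filter.mp hk).2)
    (fun l hl => by
      simp only [Finset.mem_filter, Finset.mem_univ, true_and, not_lt] at hl
      exact hl)
    (fun l hl => by
      simp only [Finset.mem_filter, Finset.mem_univ, true_and, not_lt] at hl
      exact hl)
    (by omega)
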